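/- arXiv:math/9912047 — 2 statements merged into one kernel-verified Lean document; each statement's English description precedes it below -/
import Mathlib

section
/- If G is a graph with α(G) > |V(G)|/2 and |core(G)| ≤ 1, then G has exactly one isolated vertex v, core(G) = {v}, core(G - v) = ∅, and α(G - v) = (|V(G)| - 1)/2; in particular |V(G)| is odd. -/
open Finset

variable {V : Type*} [Fintype V] [DecidableEq V]

/-  A set of vertices is stable (independent) if no two of its vertices are adjacent. -/
def stable (G : SimpleGraph V) (S : Finset V) : Prop :=
  ∀ a ∈ S, ∀ b ∈ S, ¬ G.Adj a b

/-  The (open) neighborhood of a set of vertices. -/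
open Classical in
noncomputable def nbhd (G : SimpleGraph V) (A : Finset V) : Finset V :=
  Finset.univ.filter fun v => ∃ a ∈ A, G.Adj a v

/-  The stability number: maximum size of a stable set. -/
open Classical in
noncomputable def alpha (G : SimpleGraph V) : ℕ :=
  Finset.univ.sup fun S : Finset V => if stable G S then S.card else 0

/-  A maximum stable set. -/
def maxStable (G : SimpleGraph V) (S : Finset V) : Prop :=
  stable G S ∧ S.card = alpha G

/-  core(G): the intersection of all maximum stable sets. -/
open Classical in
noncomputable def core (G : SimpleGraph V) : Finset V :=
  Finset.univ.filter fun v => ∀ S : Finset V, maxStable G S → v ∈ S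

/-  A vertex is isolated if it has no neighbors. -/
def isolated (G : SimpleGraph V) (v : V) : Prop := ∀ w, ¬ G.Adj v w

/-  The set of isolated vertices. -/
open Classical in
noncomputable def isol (G : SimpleGraph V) : Finset V :=
  Finset.univ.filter fun v => isolated G v

/-  If α(G) > |V(G)|/2 and |core(G)| ≤ 1, then G has exactly one isolated vertex v,
core(G) = {v}, core(G - v) = ∅, α(G - v) = (|V(G)| - 1)/2, and |V(G)| is odd. -/

set_option linter.unusedSectionVars false

section Aux

variable (G : SimpleGraph V)

lemma stable_subset {S T : Finset V} (h : stable G T) (hST : S ⊆ T) : stable G S :=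
  fun a ha b hb => h a (hST ha) b (hST hb)

open Classical in
lemma stable_card_le {S : Finset V} (h : stable G S) : S.card ≤ alpha G := by
  unfold alpha
  refine le_trans ?_ (Finset.le_sup (f := fun T : Finset V => if stable G T then T.card else 0)
    (Finset.mem_univ S))
  show S.card ≤ if stable G S then S.card else 0
  rw [if_pos h]

open Classical in
lemma exists_maxStable : ∃ S, maxStable G S := by
  obtain ⟨S, -, hS⟩ := Finset.exists_mem_eq_sup Finset.univ univ_nonempty
    (fun S : Finset V => if stable G S then S.card else 0)
  have halpha : alpha G = if stable G S then S.card else 0 := by unfold alpha; exact hS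
  by_cases hst : stable G S
  · exact ⟨S, hst, by rw [halpha, if_pos hst]⟩
  · exact ⟨∅, fun a ha => absurd ha (Finset.notMem_empty a), by
      rw [halpha, if_neg hst, Finset.card_empty]⟩

lemma mem_core_iff {v : V} : v ∈ core G ↔ ∀ S : Finset V, maxStable G S → v ∈ S := by
  classical
  unfold core
  simp only [Finset.mem_filter, Finset.mem_univ, true_and]

/-- Exchange lemma. -/
lemma exchange {A S B : Finset V} (hA : stable G A) (hS : maxStable G S)
    (hdisj : ∀ x ∈ A, x ∉ S) (hBS : B ⊆ S)
    (hB : ∀ y ∈ S, (∃ x ∈ A, G.Adj x y) → y ∈ B) : A.card ≤ B.card := by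
  have hstT : stable G (A ∪ (S \ B)) := by
    intro a ha b hb hadj
    rcases Finset.mem_union.1 ha with ha | ha <;> rcases Finset.mem_union.1 hb with hb | hb
    · exact hA a ha b hb hadj
    · have hbS := (Finset.mem_sdiff.1 hb).1
      exact (Finset.mem_sdiff.1 hb).2 (hB b hbS ⟨a, ha, hadj⟩)
    · have haS := (Finset.mem_sdiff.1 ha).1
      exact (Finset.mem_sdiff.1 ha).2 (hB a haS ⟨b, hb, hadj.symm⟩)
    · exact hS.1 a (Finset.mem_sdiff.1 ha).1 b (Finset.mem_sdiff.1 hb).1 hadj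
  have hdT : Disjoint A (S \ B) := by
    rw [Finset.disjoint_left]
    intro x hx hx'
    exact hdisj x hx (Finset.mem_sdiff.1 hx').1
  have hcard : A.card + (S \ B).card ≤ S.card := by
    rw [← Finset.card_union_of_disjoint hdT, hS.2]
    exact stable_card_le G hstT
  have h5 : (S \ B).card = S.card - B.card := Finset.card_sdiff_of_subset hBS
  have hb' : B.card ≤ S.card := Finset.card_le_card hBS
  omega

/-- Key inequality for families of maximum stable sets. -/
lemma family_ineq : ∀ (F : Finset (Finset V)) (hF : F.Nonempty),
    (∀ S ∈ F, maxStable G S) → 2 * alpha G ≤ (F.sup id).card + (F.inf id).card := by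
  intro F hF
  induction hF using Finset.Nonempty.cons_induction with
  | singleton a =>
    intro h
    have := (h a (Finset.mem_singleton_self a)).2
    simp only [Finset.sup_singleton, Finset.inf_singleton, id_eq]
    omega
  | cons S F₀ hnot hne ih =>
    intro h
    have hS : maxStable G S := h S (Finset.mem_cons_self S F₀)
    have ih' := ih (fun T hT => h T (Finset.mem_cons_of_mem hT))
    set I := F₀.inf id with hI
    set U := F₀.sup id with hU
    obtain ⟨S₀, hS₀⟩ := hne
    have hIS₀ : I ⊆ S₀ := Finset.le_iff_subset.mp (Finset.inf_le hS₀)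
    have hAst : stable G (I \ S) :=
      stable_subset G (h S₀ (Finset.mem_cons_of_mem hS₀)).1
        (Finset.Subset.trans (Finset.sdiff_subset) hIS₀)
    have hexch : (I \ S).card ≤ (S \ U).card := by
      refine exchange G hAst hS (fun x hx => (Finset.mem_sdiff.1 hx).2)
        (Finset.sdiff_subset) ?_
      intro y hyS ⟨x, hx, hadj⟩
      refine Finset.mem_sdiff.2 ⟨hyS, ?_⟩
      intro hyU
      obtain ⟨T, hT, hyT⟩ := Finset.mem_sup.1 hyU
      have hxT : x ∈ T :=
        Finset.le_iff_subset.mp (Finset.inf_le hT) (Finset.mem_sdiff.1 hx).1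
      exact (h T (Finset.mem_cons_of_mem hT)).1 x hxT y hyT hadj
    rw [Finset.sup_cons, Finset.inf_cons, id_eq]
    simp only [Finset.sup_eq_union, Finset.inf_eq_inter]
    show 2 * alpha G ≤ (S ∪ U).card + (S ∩ I).card
    have e1 : (S ∪ U).card + (S ∩ U).card = S.card + U.card :=
      Finset.card_union_add_card_inter S U
    have e2 : (I \ S).card + (I ∩ S).card = I.card := Finset.card_sdiff_add_card_inter I S
    have e2' : (S ∩ I).card = (I ∩ S).card := by rw [Finset.inter_comm]
    have e3 : (S \ U).card + (S ∩ U).card = S.card := Finset.card_sdiff_add_card_inter S U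
    have e4 : S.card = alpha G := hS.2
    omega

/-- Hammer–Hansen–Simeone: 2·α(G) ≤ |V| + |core(G)|. -/
lemma hhs : 2 * alpha G ≤ Fintype.card V + (core G).card := by
  classical
  set F : Finset (Finset V) := Finset.univ.filter (maxStable G) with hF
  have hFne : F.Nonempty := by
    obtain ⟨S, hS⟩ := exists_maxStable G
    exact ⟨S, by simp [hF, hS]⟩
  have hmem : ∀ S ∈ F, maxStable G S := fun S hS => (Finset.mem_filter.1 hS).2
  have hkey := family_ineq G F hFne hmem
  have hcore : F.inf id ⊆ core G := by
    intro v hv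
    rw [mem_core_iff]
    intro S hS
    exact Finset.le_iff_subset.mp (Finset.inf_le (by simp [hF, hS])) hv
  have h1 : (F.inf id).card ≤ (core G).card := Finset.card_le_card hcore
  have h2 : (F.sup id).card ≤ Fintype.card V := by
    rw [← Finset.card_univ]
    exact Finset.card_le_card (Finset.subset_univ _)
  omega

end Aux

section Comap

open Classical in
lemma pullback_card {W : Type*} [Fintype W] [DecidableEq W] (G : SimpleGraph V)
    (v : V) (f : W → V) (hf : Function.Injective f)
    (hrange : ∀ x : V, (∃ w, f w = x) ↔ (x ≠ v ∧ ¬ G.Adj v x))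
    {S : Finset V} (hS : stable G S) (hvS : v ∈ S) :
    (Finset.univ.filter (fun w => f w ∈ S)).card + 1 = S.card := by
  have hbij : (Finset.univ.filter (fun w => f w ∈ S)).card = (S.erase v).card := by
    apply Finset.card_bij (fun w _ => f w)
    · intro w hw
      have hfw : f w ∈ S := (Finset.mem_filter.1 hw).2
      have := (hrange (f w)).1 ⟨w, rfl⟩
      exact Finset.mem_erase.2 ⟨this.1, hfw⟩
    · intro w₁ h₁ w₂ h₂ he; exact hf he
    · intro x hx
      have hx' := Finset.mem_erase.1 hx
      have hadj : ¬ G.Adj v x := fun h => hS v hvS x hx'.2 h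
      obtain ⟨w, rfl⟩ := (hrange x).2 ⟨hx'.1, hadj⟩
      exact ⟨w, Finset.mem_filter.2 ⟨Finset.mem_univ w, hx'.2⟩, rfl⟩
  rw [hbij, Finset.card_erase_of_mem hvS]
  have : 1 ≤ S.card := Finset.card_pos.2 ⟨v, hvS⟩
  omega

open Classical in
lemma alpha_comap {W : Type*} [Fintype W] [DecidableEq W] (G : SimpleGraph V)
    (v : V) (hvcore : v ∈ core G) (f : W → V) (hf : Function.Injective f)
    (hrange : ∀ x : V, (∃ w, f w = x) ↔ (x ≠ v ∧ ¬ G.Adj v x)) :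
    alpha (G.comap f) + 1 = alpha G := by
  obtain ⟨S', hS'⟩ := exists_maxStable (G.comap f)
  obtain ⟨S, hS⟩ := exists_maxStable G
  have hvS : v ∈ S := (mem_core_iff G).1 hvcore S hS
  have hup : alpha (G.comap f) + 1 ≤ alpha G := by
    set T := S'.map ⟨f, hf⟩ with hT
    have hvT : v ∉ T := by
      intro hv
      obtain ⟨w, -, hw⟩ := Finset.mem_map.1 hv
      exact ((hrange v).1 ⟨w, hw⟩).1 rfl
    have key : ∀ x ∈ T, ¬ G.Adj v x := by
      intro x hx
      obtain ⟨w, -, rfl⟩ := Finset.mem_map.1 hx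
      exact ((hrange (f w)).1 ⟨w, rfl⟩).2
    have hstab : stable G (insert v T) := by
      intro a ha b hb hadj
      rcases Finset.mem_insert.1 ha with h1 | h1
      · rw [h1] at hadj
        rcases Finset.mem_insert.1 hb with h2 | h2
        · rw [h2] at hadj; exact G.irrefl hadj
        · exact key b h2 hadj
      · rcases Finset.mem_insert.1 hb with h2 | h2
        · rw [h2] at hadj; exact key a h1 hadj.symm
        · obtain ⟨w₁, hw₁, rfl⟩ := Finset.mem_map.1 h1
          obtain ⟨w₂, hw₂, rfl⟩ := Finset.mem_map.1 h2
          exact hS'.1 w₁ hw₁ w₂ hw₂ hadj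
    have hle := stable_card_le G hstab
    rw [Finset.card_insert_of_notMem hvT, Finset.card_map, hS'.2] at hle
    exact hle
  have hlow : alpha G ≤ alpha (G.comap f) + 1 := by
    have hps : stable (G.comap f) (Finset.univ.filter (fun w => f w ∈ S)) := by
      intro a ha b hb hadj
      exact hS.1 (f a) (Finset.mem_filter.1 ha).2 (f b) (Finset.mem_filter.1 hb).2 hadj
    have hle := stable_card_le (G.comap f) hps
    have hc := pullback_card G v f hf hrange hS.1 hvS
    rw [hS.2] at hc
    omega
  omega

open Classical in
lemma core_comap {W : Type*} [Fintype W] [DecidableEq W] (G : SimpleGraph V)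
    (v : V) (hvcore : v ∈ core G) (f : W → V) (hf : Function.Injective f)
    (hrange : ∀ x : V, (∃ w, f w = x) ↔ (x ≠ v ∧ ¬ G.Adj v x))
    {u : W} (hu : u ∈ core (G.comap f)) : f u ∈ core G := by
  rw [mem_core_iff] at hu ⊢
  intro S hS
  have hvS : v ∈ S := (mem_core_iff G).1 hvcore S hS
  have hps : stable (G.comap f) (Finset.univ.filter (fun w => f w ∈ S)) := by
    intro a ha b hb hadj
    exact hS.1 (f a) (Finset.mem_filter.1 ha).2 (f b) (Finset.mem_filter.1 hb).2 hadj
  have hc := pullback_card G v f hf hrange hS.1 hvS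
  have hmax : maxStable (G.comap f) (Finset.univ.filter (fun w => f w ∈ S)) := by
    refine ⟨hps, ?_⟩
    have h1 := alpha_comap G v hvcore f hf hrange
    rw [hS.2] at hc
    omega
  exact (Finset.mem_filter.1 (hu _ hmax)).2

lemma isolated_mem_core (G : SimpleGraph V) {v : V} (h : isolated G v) : v ∈ core G := by
  rw [mem_core_iff]
  intro S hS
  by_contra hv
  have hstab : stable G (insert v S) := by
    intro a ha b hb hadj
    rcases Finset.mem_insert.1 ha with rfl | ha
    · exact h b hadj
    · rcases Finset.mem_insert.1 hb with rfl | hb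
      · exact h a hadj.symm
      · exact hS.1 a ha b hb hadj
  have hle := stable_card_le G hstab
  rw [Finset.card_insert_of_notMem hv, hS.2] at hle
  omega

end Comap

theorem stmt5 (G : SimpleGraph V) (h1 : Fintype.card V < 2 * alpha G)
    (h2 : (core G).card ≤ 1) :
    ∃ v : V, isol G = {v} ∧ core G = {v} ∧
      core (SimpleGraph.comap (Subtype.val : {x : V // x ≠ v} → V) G) = ∅ ∧
      2 * alpha (SimpleGraph.comap (Subtype.val : {x : V // x ≠ v} → V) G)
        = Fintype.card V - 1 ∧
      Odd (Fintype.card V) := by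
  classical
  have hh := hhs G
  have hcore1 : (core G).card = 1 := by omega
  obtain ⟨v, hv⟩ := Finset.card_eq_one.1 hcore1
  have hvcore : v ∈ core G := by rw [hv]; exact Finset.mem_singleton_self v
  have h2a : 2 * alpha G = Fintype.card V + 1 := by omega
  -- v is isolated
  have hiso : isolated G v := by
    by_contra hni
    simp only [isolated, not_forall, not_not] at hni
    obtain ⟨w, hw⟩ := hni
    have hwv : w ≠ v := fun h => G.irrefl (h ▸ hw)
    set p : V → Prop := fun x => x ≠ v ∧ ¬ G.Adj v x with hp
    have hinj : Function.Injective (Subtype.val : {x // p x} → V) := Subtype.val_injective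
    have hrange : ∀ x : V,
        (∃ y : {x // p x}, (y : V) = x) ↔ (x ≠ v ∧ ¬ G.Adj v x) := by
      intro x
      constructor
      · rintro ⟨⟨y, hy⟩, rfl⟩; exact hy
      · intro hx; exact ⟨⟨x, hx⟩, rfl⟩
    have halpha := alpha_comap G v hvcore (Subtype.val : {x // p x} → V) hinj hrange
    have hhs2 := hhs (G.comap (Subtype.val : {x // p x} → V))
    have hcard2 : Fintype.card {x // p x} + 2 ≤ Fintype.card V := by
      have e1 : Fintype.card {x // p x} = (Finset.univ.filter p).card :=
        Fintype.card_subtype p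
      have e2 : Finset.univ.filter p ⊆ Finset.univ \ {v, w} := by
        intro x hx
        have hx' := (Finset.mem_filter.1 hx).2
        rw [Finset.mem_sdiff]
        refine ⟨Finset.mem_univ x, ?_⟩
        simp only [Finset.mem_insert, Finset.mem_singleton]
        rintro (rfl | rfl)
        · exact hx'.1 rfl
        · exact hx'.2 hw
      have e3 : (Finset.univ \ ({v, w} : Finset V)).card = Fintype.card V - 2 := by
        rw [Finset.card_sdiff_of_subset (Finset.subset_univ _), Finset.card_univ,
          Finset.card_insert_of_notMem (by simpa using (fun h => hwv h.symm)),
          Finset.card_singleton]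
      have e4 : ({v, w} : Finset V).card ≤ Fintype.card V := by
        rw [← Finset.card_univ]; exact Finset.card_le_card (Finset.subset_univ _)
      have e5 : ({v, w} : Finset V).card = 2 := by
        rw [Finset.card_insert_of_notMem (by simpa using (fun h => hwv h.symm)),
          Finset.card_singleton]
      have := Finset.card_le_card e2
      omega
    have hne : 1 ≤ (core (G.comap (Subtype.val : {x // p x} → V))).card := by omega
    obtain ⟨u, hu⟩ := Finset.card_pos.1 hne
    have hmem := core_comap G v hvcore (Subtype.val : {x // p x} → V) hinj hrange hu
    rw [hv, Finset.mem_singleton] at hmem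
    exact u.2.1 hmem
  -- now the deletion graph
  set q : V → Prop := fun x => x ≠ v with hq
  have hinj : Function.Injective (Subtype.val : {x // q x} → V) := Subtype.val_injective
  have hrange : ∀ x : V,
      (∃ y : {x // q x}, (y : V) = x) ↔ (x ≠ v ∧ ¬ G.Adj v x) := by
    intro x
    constructor
    · rintro ⟨⟨y, hy⟩, rfl⟩; exact ⟨hy, hiso y⟩
    · intro hx; exact ⟨⟨x, hx.1⟩, rfl⟩
  have halpha := alpha_comap G v hvcore (Subtype.val : {x // q x} → V) hinj hrange
  refine ⟨v, ?_, hv, ?_, ?_, ?_⟩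
  · -- isol G = {v}
    apply Finset.Subset.antisymm
    · intro x hx
      have hx' : isolated G x := by
        have := Finset.mem_filter.1 hx
        exact this.2
      have := isolated_mem_core G hx'
      rw [hv] at this
      exact this
    · intro x hx
      rw [Finset.mem_singleton] at hx
      subst hx
      exact Finset.mem_filter.2 ⟨Finset.mem_univ x, hiso⟩
  · -- core of deletion is empty
    rw [Finset.eq_empty_iff_forall_notMem]
    intro u hu
    have hmem := core_comap G v hvcore (Subtype.val : {x // q x} → V) hinj hrange hu
    rw [hv, Finset.mem_singleton] at hmem
    exact u.2 hmem
  · omega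
  · exact ⟨alpha G - 1, by omega⟩
end

section
/- If G has α(G) > |V(G)|/2, then core(G) ≥ 1 (Hammer–Hansen–Simeone): there exists a vertex belonging to every maximum stable set of G. -/
open Finset

variable {V : Type*} [Fintype V] [DecidableEq V]

lemma stable_card_le_alpha (G : SimpleGraph V) {T : Finset V} (hT : stable G T) :
    T.card ≤ alpha G := by
  classical
  have := Finset.le_sup (f := fun S : Finset V => if stable G S then S.card else 0)
    (Finset.mem_univ T)
  rw [alpha]
  simpa [hT] using this

open Classical in
lemma key_lemma (G : SimpleGraph V) {X S : Finset V} (hX : stable G X)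
    (hS : maxStable G S) (hd : Disjoint X S) :
    X.card ≤ (S.filter fun s => ∃ x ∈ X, G.Adj x s).card := by
  classical
  set A := S.filter fun s => ∃ x ∈ X, G.Adj x s with hA
  have hAS : A ⊆ S := Finset.filter_subset _ _
  have hstab : stable G ((S \ A) ∪ X) := by
    intro a ha b hb hab
    rcases Finset.mem_union.1 ha with ha' | ha' <;>
      rcases Finset.mem_union.1 hb with hb' | hb'
    · exact hS.1 a (Finset.mem_sdiff.1 ha').1 b (Finset.mem_sdiff.1 hb').1 hab
    · have : a ∈ A := Finset.mem_filter.2 ⟨(Finset.mem_sdiff.1 ha').1, ⟨b, hb', hab.symm⟩⟩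
      exact (Finset.mem_sdiff.1 ha').2 this
    · have : b ∈ A := Finset.mem_filter.2 ⟨(Finset.mem_sdiff.1 hb').1, ⟨a, ha', hab⟩⟩
      exact (Finset.mem_sdiff.1 hb').2 this
    · exact hX a ha' b hb' hab
  have hdisj : Disjoint (S \ A) X := (hd.mono_left (le_refl X)).symm.mono_left
    (Finset.sdiff_subset)
  have hcard : (S \ A).card + X.card ≤ alpha G := by
    have := stable_card_le_alpha G hstab
    rwa [Finset.card_union_of_disjoint hdisj] at this
  have h1 : (S \ A).card = S.card - A.card := Finset.card_sdiff_of_subset hAS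
  have h2 : A.card ≤ S.card := Finset.card_le_card hAS
  have h3 : S.card = alpha G := hS.2
  omega

lemma inv_lemma (G : SimpleGraph V) (F : Finset (Finset V))
    (hF : ∀ S ∈ F, maxStable G S) (hne : F.Nonempty) :
    2 * alpha G ≤ (F.inf id).card + (F.sup id).card := by
  classical
  induction F using Finset.cons_induction with
  | empty => exact absurd hne (by simp)
  | cons S F hSF ih =>
    rcases F.eq_empty_or_nonempty with rfl | hFne
    · have hS : maxStable G S := hF S (Finset.mem_cons_self _ _)
      simp only [Finset.inf_cons, Finset.sup_cons, Finset.inf_empty, Finset.sup_empty,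
        id_eq, inf_top_eq, sup_bot_eq]
      rw [hS.2]; omega
    · have hF' : ∀ T ∈ F, maxStable G T := fun T hT => hF T (Finset.mem_cons.2 (Or.inr hT))
      have IH := ih hF' hFne
      have hS : maxStable G S := hF S (Finset.mem_cons_self _ _)
      set I := F.inf id with hI
      set U := F.sup id with hU
      obtain ⟨S₀, hS₀⟩ := hFne
      have hIsub : I ⊆ S₀ := Finset.le_iff_subset.1 (Finset.inf_le hS₀)
      set X := I \ S with hX
      have hXstab : stable G X := by
        intro a ha b hb
        exact (hF' S₀ hS₀).1 a (hIsub (Finset.mem_sdiff.1 ha).1)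
          b (hIsub (Finset.mem_sdiff.1 hb).1)
      have hXd : Disjoint X S := Finset.sdiff_disjoint
      have hkey := key_lemma G hXstab hS hXd
      set A := S.filter fun s => ∃ x ∈ X, G.Adj x s with hA
      have hAsub : A ⊆ S \ U := by
        intro a ha
        obtain ⟨haS, x, hxX, hadj⟩ := Finset.mem_filter.1 ha
        refine Finset.mem_sdiff.2 ⟨haS, fun haU => ?_⟩
        obtain ⟨T, hTF, haT⟩ := Finset.mem_sup.1 haU
        have hxT : x ∈ T := Finset.le_iff_subset.1 (Finset.inf_le hTF) (Finset.mem_sdiff.1 hxX).1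
        exact (hF' T hTF).1 x hxT a haT hadj
      have h4 : X.card ≤ (S \ U).card := hkey.trans (Finset.card_le_card hAsub)
      have h5 : (I ∩ S).card + X.card = I.card := by
        rw [hX]; exact Finset.card_inter_add_card_sdiff I S
      have h6 := Finset.card_sdiff_add_card S U
      have goal_eq : (Finset.cons S F hSF).inf id = S ∩ I ∧
          (Finset.cons S F hSF).sup id = S ∪ U := by
        constructor
        · rw [Finset.inf_cons]; rfl
        · rw [Finset.sup_cons]; rfl
      rw [goal_eq.1, goal_eq.2, Finset.inter_comm]
      omega

/-  Hammer–Hansen–Simeone: if α(G) > |V(G)|/2, then some vertex belongs to every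
maximum stable set of G. -/
theorem stmt9 (G : SimpleGraph V) (h1 : Fintype.card V < 2 * alpha G) :
    ∃ v : V, ∀ S : Finset V, maxStable G S → v ∈ S := by
  classical
  -- there exists a maximum stable set
  obtain ⟨S, -, hSeq⟩ := Finset.exists_mem_eq_sup (Finset.univ : Finset (Finset V))
    ⟨∅, Finset.mem_univ ∅⟩ (fun S : Finset V => if stable G S then S.card else 0)
  have hαpos : 0 < alpha G := by omega
  have hSstab : stable G S := by
    by_contra h
    rw [if_neg h] at hSeq
    rw [alpha] at hαpos
    omega
  rw [if_pos hSstab] at hSeq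
  have hSmax : maxStable G S := ⟨hSstab, hSeq.symm⟩
  set F := Finset.univ.filter (fun T : Finset V => maxStable G T) with hF
  have hFne : F.Nonempty := ⟨S, Finset.mem_filter.2 ⟨Finset.mem_univ _, hSmax⟩⟩
  have hFm : ∀ T ∈ F, maxStable G T := fun T hT => (Finset.mem_filter.1 hT).2
  have hinv := inv_lemma G F hFm hFne
  have hUle : (F.sup id).card ≤ Fintype.card V := Finset.card_le_univ _
  have hIpos : 0 < (F.inf id).card := by omega
  obtain ⟨v, hv⟩ := Finset.card_pos.1 hIpos
  refine ⟨v, fun T hT => ?_⟩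
  have hTF : T ∈ F := Finset.mem_filter.2 ⟨Finset.mem_univ _, hT⟩
  exact Finset.le_iff_subset.1 (Finset.inf_le hTF) hv
end
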